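/- Let n ≥ 2 and 0 ≤ s < C(n,2) be integers, and let q, r be the unique integers with 1 ≤ r < q ≤ n and C(n,2) − s − 1 = C(q,2) − r. Then: (a) for every sequence of integers s₁, …, s_n with 1 ≤ s_k ≤ k for all k and Σ_{k=1}^n (s_k − 1) = s, the product ∏_{k=1}^n s_k is at least r·n!/q!; and (b) there exists such a sequence with ∏_{k=1}^n s_k = r·n!/q! (namely s_k = k for q < k ≤ n, s_q = r, and s_k = 1 for k < q). -/
import Mathlib

open Finset

set_option maxHeartbeats 1000000

private lemma choose_two_succ (n : ℕ) : (n+1).choose 2 = n.choose 2 + n := by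
  have h := Nat.choose_succ_succ n 1
  simp [Nat.choose_one_right] at h
  omega


private lemma sum_Icc_pred (n : ℕ) : ∑ k ∈ Icc 1 n, (k - 1) = n.choose 2 := by
  induction n with
  | zero => simp
  | succ n ih =>
    rw [Finset.sum_Icc_succ_top (by omega : 1 ≤ n + 1), ih, choose_two_succ]
    omega

private lemma prod_Icc_id (n : ℕ) : ∏ x ∈ Icc 1 n, x = n.factorial := by
  rw [← Finset.Ico_add_one_right_eq_Icc, Finset.prod_Ico_id_eq_factorial]

private lemma choose_two_mono {q Q : ℕ} (h : q ≤ Q) : q.choose 2 ≤ Q.choose 2 :=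
  Nat.choose_le_choose 2 h

private lemma choose_gap {q Q : ℕ} (h : q < Q) : q.choose 2 + Q ≤ Q.choose 2 + 1 := by
  have h1 : Q - 1 + 1 = Q := by omega
  have h2 := choose_two_succ (Q - 1)
  rw [h1] at h2
  have h3 : q.choose 2 ≤ (Q-1).choose 2 := choose_two_mono (by omega)
  omega

private lemma IIa (q r : ℕ) (hr : 1 ≤ r) (hq : 1 ≤ q) :
    ∀ Q, q + 1 ≤ Q →
      (Q:ℤ) * (((Q.choose 2 : ℤ) - q.choose 2) + r - Q + 1) * q.factorial ≤ (r:ℤ) * Q.factorial := by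
  refine Nat.le_induction ?_ ?_
  · have h1' : ((q+1).choose 2 : ℤ) = (q.choose 2 : ℤ) + q := by exact_mod_cast choose_two_succ q
    have h2' : ((q+1).factorial : ℤ) = ((q:ℤ)+1) * q.factorial := by exact_mod_cast Nat.factorial_succ q
    rw [h1', h2']
    push_cast
    ring_nf
    exact le_rfl
  · intro Q hQ ih
    have h1 : ((Q+1).choose 2 : ℤ) = (Q.choose 2 : ℤ) + Q := by exact_mod_cast choose_two_succ Q
    have h2 : ((Q+1).factorial : ℤ) = ((Q:ℤ)+1) * Q.factorial := by exact_mod_cast Nat.factorial_succ Q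
    have hK : (q.choose 2 : ℤ) + (Q:ℤ) ≤ (Q.choose 2 : ℤ) + 1 := by
      exact_mod_cast choose_gap (show q < Q by omega)
    have hfq : (1:ℤ) ≤ q.factorial := by exact_mod_cast q.factorial_pos
    have hQ2 : (2:ℤ) ≤ Q := by exact_mod_cast (show 2 ≤ Q by omega)
    have hr' : (1:ℤ) ≤ r := by exact_mod_cast hr
    have key : (((Q.choose 2 : ℤ) - q.choose 2) + r) * q.factorial ≤ (r:ℤ) * Q.factorial := by
      have h3 : ((Q.choose 2 : ℤ) - q.choose 2) + r ≤ (Q:ℤ) * (((Q.choose 2 : ℤ) - q.choose 2) + r - Q + 1) := by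
        nlinarith [mul_nonneg (show (0:ℤ) ≤ (Q:ℤ) - 1 by linarith)
          (show (0:ℤ) ≤ ((Q.choose 2 : ℤ) - q.choose 2) + r - Q by linarith)]
      have := mul_le_mul_of_nonneg_right h3 (show (0:ℤ) ≤ q.factorial by linarith)
      linarith
    rw [h1, h2]
    have hfin := mul_le_mul_of_nonneg_left key (show (0:ℤ) ≤ (Q:ℤ)+1 by linarith)
    push_cast
    nlinarith [hfin]

private lemma star (q r Q R t m : ℕ) (hr : 1 ≤ r) (hrq : r ≤ q) (hq : 1 ≤ q)
    (hqQ : q ≤ Q) (hR : 1 ≤ R) (hRQ : R < Q) (hQm : Q ≤ m)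
    (ht : 1 ≤ t) (htm : t ≤ m)
    (heqn : (t:ℤ) = (m:ℤ) - ((Q.choose 2 : ℤ) - q.choose 2) - r + R) :
    m * R * q.factorial ≤ t * r * Q.factorial := by
  have hfq : (1:ℤ) ≤ q.factorial := by exact_mod_cast q.factorial_pos
  have hr' : (1:ℤ) ≤ r := by exact_mod_cast hr
  have hR' : (1:ℤ) ≤ R := by exact_mod_cast hR
  have ht' : (1:ℤ) ≤ t := by exact_mod_cast ht
  have htm' : (t:ℤ) ≤ m := by exact_mod_cast htm
  have hRQ' : (R:ℤ) + 1 ≤ Q := by exact_mod_cast hRQ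
  have hQm' : (Q:ℤ) ≤ m := by exact_mod_cast hQm
  rw [show (m * R * q.factorial ≤ t * r * Q.factorial) ↔
      ((m:ℤ) * R * q.factorial ≤ (t:ℤ) * r * Q.factorial) by exact_mod_cast Iff.rfl]
  rcases eq_or_lt_of_le hqQ with hEq | hlt
  · -- q = Q
    subst hEq
    have hrm : (r:ℤ) ≤ m := by
      have : (r:ℤ) ≤ q := by exact_mod_cast hrq
      linarith
    have key : (m:ℤ) * R ≤ (t:ℤ) * r := by
      nlinarith [mul_nonneg (show (0:ℤ) ≤ (r:ℤ) - R by linarith [heqn, htm'])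
        (show (0:ℤ) ≤ (m:ℤ) - r by linarith)]
    nlinarith [key, (show (0:ℤ) < q.factorial by linarith)]
  · -- q < Q
    obtain ⟨K, hKdef⟩ : ∃ K : ℤ, K = (Q.choose 2 : ℤ) - q.choose 2 := ⟨_, rfl⟩
    rw [← hKdef] at heqn
    have hK : (Q:ℤ) - 1 ≤ K := by
      have h := choose_gap hlt
      have h' : (q.choose 2 : ℤ) + (Q:ℤ) ≤ (Q.choose 2 : ℤ) + 1 := by exact_mod_cast h
      rw [hKdef]; linarith
    have hFQ : (Q:ℤ) * q.factorial ≤ Q.factorial := by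
      have h1 : Q * q.factorial ≤ Q * (Q-1).factorial :=
        Nat.mul_le_mul_left Q (Nat.factorial_le (by omega))
      have h2 : Q * (Q-1).factorial = Q.factorial := Nat.mul_factorial_pred (by omega)
      exact_mod_cast h2 ▸ h1
    have hF0 : (0:ℤ) ≤ Q.factorial := by positivity
    have hfq0 : (0:ℤ) ≤ q.factorial := by linarith
    have hrF : (Q:ℤ) * q.factorial ≤ (r:ℤ) * Q.factorial := by
      calc (Q:ℤ) * q.factorial ≤ Q.factorial := hFQ
        _ = 1 * (Q.factorial:ℤ) := (one_mul _).symm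
        _ ≤ (r:ℤ) * Q.factorial := mul_le_mul_of_nonneg_right hr' hF0
    have hIIa := IIa q r hr hq Q (by omega)
    rw [← hKdef] at hIIa
    have hcoef : (R:ℤ) * q.factorial ≤ (r:ℤ) * Q.factorial :=
      le_trans (mul_le_mul_of_nonneg_right (by linarith : (R:ℤ) ≤ Q) hfq0) hrF
    have hm : (m:ℤ) = t + K + r - R := by linarith [heqn]
    rcases le_or_gt ((Q:ℤ) - 1) (K + r - R) with hc | hc
    · -- subcase (I): t could be 1; use r*F ≥ (K+r+1-R)*R*fq
      have fact : (K + (r:ℤ) + 1 - R) * R ≤ (Q:ℤ) * (K + r + 1 - Q) := by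
        nlinarith [mul_nonneg (show (0:ℤ) ≤ (Q:ℤ) - R by linarith)
          (show (0:ℤ) ≤ K + (r:ℤ) + 1 - Q - R by linarith)]
      have key : (K + (r:ℤ) + 1 - R) * R * q.factorial ≤ (r:ℤ) * Q.factorial := by
        calc (K + (r:ℤ) + 1 - R) * R * q.factorial
            ≤ (Q:ℤ) * (K + r + 1 - Q) * q.factorial := by nlinarith [fact]
          _ ≤ (r:ℤ) * Q.factorial := by
              have : (Q:ℤ) * (K + r - Q + 1) * q.factorial ≤ (r:ℤ) * Q.factorial := hIIa
              nlinarith [this]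
      -- goal: m*R*fq ≤ t*r*F, m = t+K+r-R
      nlinarith [key, mul_nonneg (show (0:ℤ) ≤ (t:ℤ) - 1 by linarith)
        (show (0:ℤ) ≤ (r:ℤ) * Q.factorial - R * q.factorial by linarith [hcoef])]
    · -- subcase (II): t ≥ Q - K - r + R ≥ 2
      have ht2 : (Q:ℤ) - K - r + R ≤ t := by linarith [hQm', hm]
      have hneed : ((Q:ℤ) - K - r + R) * ((r:ℤ) * Q.factorial) ≥ (Q:ℤ) * R * q.factorial := by
        have he : (0:ℤ) ≤ (R:ℤ) - (K + r - Q + 1) := by linarith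
        nlinarith [hIIa, mul_nonneg he (show (0:ℤ) ≤ (r:ℤ) * Q.factorial - Q * q.factorial by linarith [hrF])]
      nlinarith [hneed, mul_nonneg (show (0:ℤ) ≤ (t:ℤ) - ((Q:ℤ) - K - r + R) by linarith)
        (show (0:ℤ) ≤ (r:ℤ) * Q.factorial - R * q.factorial by linarith [hcoef])]

private lemma exists_params (n s : ℕ) (hs : s ≤ n.choose 2) :
    ∃ q r : ℕ, ((1 ≤ r ∧ r < q ∧ q ≤ n) ∨ (q = 1 ∧ r = 1)) ∧
      ((n.choose 2 : ℤ) - s - 1 = (q.choose 2 : ℤ) - r) := by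
  rcases eq_or_lt_of_le hs with hEq | hlt
  · refine ⟨1, 1, Or.inr ⟨rfl, rfl⟩, ?_⟩
    have : (1:ℕ).choose 2 = 0 := rfl
    rw [this]; push_cast; omega
  · have hex : ∃ q : ℕ, n.choose 2 - 1 - s < q.choose 2 := ⟨n, by omega⟩
    set t := n.choose 2 - 1 - s with htdef
    set q := Nat.find hex with hqdef
    have hq : t < q.choose 2 := Nat.find_spec hex
    have hqn : q ≤ n := Nat.find_le (by omega)
    have hq2 : 2 ≤ q := by
      by_contra h
      push_neg at h
      have : q.choose 2 = 0 := Nat.choose_eq_zero_of_lt (by omega)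
      omega
    have hmin : (q-1).choose 2 ≤ t := by
      by_contra h
      push_neg at h
      exact Nat.find_min hex (show q - 1 < q by omega) h
    have h3 : q.choose 2 = (q-1).choose 2 + (q-1) := by
      have := choose_two_succ (q-1)
      rw [show q - 1 + 1 = q by omega] at this
      omega
    refine ⟨q, q.choose 2 - t, Or.inl ⟨by omega, by omega, hqn⟩, ?_⟩
    have hc1 : t ≤ q.choose 2 := le_of_lt hq
    push_cast [Nat.cast_sub hc1]
    omega

private lemma main_lemma : ∀ n s q r : ℕ, ∀ f : ℕ → ℕ, s ≤ n.choose 2 →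
    ((1 ≤ r ∧ r < q ∧ q ≤ n) ∨ (q = 1 ∧ r = 1)) →
    ((n.choose 2 : ℤ) - s - 1 = (q.choose 2 : ℤ) - r) →
    (∀ k ∈ Icc 1 n, 1 ≤ f k ∧ f k ≤ k) →
    (∑ k ∈ Icc 1 n, (f k - 1)) = s →
    r * n.factorial ≤ q.factorial * ∏ k ∈ Icc 1 n, f k := by
  intro n
  induction n with
  | zero =>
    intro s q r f hs hcond heq hf hsum
    have hs0 : s = 0 := by simpa using hs
    subst hs0
    rcases hcond with ⟨h1, h2, h3⟩ | ⟨h1, h2⟩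
    · omega
    · subst h1; subst h2
      simp [Nat.factorial]
  | succ n ih =>
    intro s q r f hs hcond heq hf hsum
    have hmem : n + 1 ∈ Icc 1 (n+1) := by simp
    obtain ⟨ht1, htm⟩ := hf (n+1) hmem
    have hsplit : ∑ k ∈ Icc 1 (n+1), (f k - 1) = (∑ k ∈ Icc 1 n, (f k - 1)) + (f (n+1) - 1) :=
      Finset.sum_Icc_succ_top (by omega) _
    have hprodsplit : ∏ k ∈ Icc 1 (n+1), f k = (∏ k ∈ Icc 1 n, f k) * f (n+1) :=
      Finset.prod_Icc_succ_top (by omega) _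
    have hfn : ∀ k ∈ Icc 1 n, 1 ≤ f k ∧ f k ≤ k := by
      intro k hk
      simp only [Finset.mem_Icc] at hk
      exact hf k (by simp only [Finset.mem_Icc]; omega)
    have hs'le : (∑ k ∈ Icc 1 n, (f k - 1)) ≤ n.choose 2 := by
      rw [← sum_Icc_pred n]
      apply Finset.sum_le_sum
      intro k hk
      have := hfn k hk
      omega
    have hCsucc : ((n+1).choose 2 : ℤ) = (n.choose 2 : ℤ) + n := by exact_mod_cast choose_two_succ n
    rcases hcond with ⟨hr1, hrq, hqn⟩ | ⟨hq1, hr1⟩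
    · -- genuine outer
      obtain ⟨q', r', hcond', heq'⟩ := exists_params n _ hs'le
      have hIH := ih _ q' r' f hs'le hcond' heq' hfn rfl
      have hr'1 : 1 ≤ r' := by rcases hcond' with ⟨a,b,c⟩|⟨a,b⟩ <;> omega
      have hr'q' : r' ≤ q' := by rcases hcond' with ⟨a,b,c⟩|⟨a,b⟩ <;> omega
      have hq'1 : 1 ≤ q' := by rcases hcond' with ⟨a,b,c⟩|⟨a,b⟩ <;> omega
      have hseq : (s : ℤ) = (∑ k ∈ Icc 1 n, (f k - 1) : ℕ) + (f (n+1) : ℤ) - 1 := by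
        omega
      have hq'q : q' ≤ q := by
        by_contra hcon
        push_neg at hcon
        rcases hcond' with ⟨a, b, c⟩ | ⟨a, b⟩
        · have hmono : ((q.choose 2 : ℕ) : ℤ) ≤ (((q'-1).choose 2 : ℕ) : ℤ) := by
            exact_mod_cast choose_two_mono (show q ≤ q'-1 by omega)
          have hgap : (((q'-1).choose 2 : ℕ) : ℤ) + (q' : ℤ) ≤ ((q'.choose 2 : ℕ) : ℤ) + 1 := by
            exact_mod_cast choose_gap (show q'-1 < q' by omega)
          omega
        · omega
      have hstareq : ((f (n+1) : ℕ) : ℤ) =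
          ((n+1 : ℕ) : ℤ) - ((q.choose 2 : ℤ) - (q'.choose 2 : ℤ)) - r' + r := by
        push_cast
        omega
      have hstar := star q' r' q r (f (n+1)) (n+1) hr'1 hr'q' hq'1 hq'q hr1 hrq
        (by omega) ht1 htm hstareq
      have hfact : (n+1).factorial = (n+1) * n.factorial := Nat.factorial_succ n
      rw [hprodsplit, hfact]
      have key : q'.factorial * (r * ((n+1) * n.factorial)) ≤
          q'.factorial * (q.factorial * ((∏ k ∈ Icc 1 n, f k) * f (n+1))) := by
        calc q'.factorial * (r * ((n+1) * n.factorial))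
            = ((n+1) * r * q'.factorial) * n.factorial := by ring
          _ ≤ (f (n+1) * r' * q.factorial) * n.factorial := mul_le_mul_left hstar _
          _ = (q.factorial * f (n+1)) * (r' * n.factorial) := by ring
          _ ≤ (q.factorial * f (n+1)) * (q'.factorial * ∏ k ∈ Icc 1 n, f k) :=
              mul_le_mul_right hIH _
          _ = q'.factorial * (q.factorial * ((∏ k ∈ Icc 1 n, f k) * f (n+1))) := by ring
      exact Nat.le_of_mul_le_mul_left key q'.factorial_pos
    · -- degenerate outer: s = (n+1).choose 2
      subst hq1; subst hr1
      have h10 : (1:ℕ).choose 2 = 0 := rfl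
      rw [h10] at heq
      have hsmax : s = (n+1).choose 2 := by push_cast at heq; omega
      have hle : ∀ k ∈ Icc 1 (n+1), f k - 1 ≤ k - 1 := by
        intro k hk; have := hf k hk; omega
      have hsum' : ∑ k ∈ Icc 1 (n+1), (f k - 1) = ∑ k ∈ Icc 1 (n+1), (k - 1) := by
        rw [hsum, sum_Icc_pred, hsmax]
      have hpt := (Finset.sum_eq_sum_iff_of_le hle).1 hsum'
      have hprod : ∏ k ∈ Icc 1 (n+1), f k = (n+1).factorial := by
        rw [← prod_Icc_id (n+1)]
        apply Finset.prod_congr rfl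
        intro k hk
        have h1 := hf k hk
        have h2 := hpt k hk
        simp only [Finset.mem_Icc] at hk
        omega
      rw [hprod]
      simp [Nat.factorial]

private lemma ext_aux (q r : ℕ) (hr : 1 ≤ r) (hrq : r < q) :
    ∀ n, q ≤ n →
      (∑ k ∈ Icc 1 n, ((if k < q then 1 else if k = q then r else k) - 1))
        = (r - 1) + (n.choose 2 - q.choose 2) ∧
      (∏ k ∈ Icc 1 n, (if k < q then 1 else if k = q then r else k)) * q.factorial
        = r * n.factorial := by
  refine Nat.le_induction ?_ ?_
  · -- n = q
    obtain ⟨p, rfl⟩ : ∃ p, q = p + 1 := ⟨q - 1, by omega⟩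
    have hsum0 : ∑ k ∈ Icc 1 p, ((if k < p + 1 then 1 else if k = p + 1 then r else k) - 1) = 0 := by
      apply Finset.sum_eq_zero
      intro k hk
      simp only [Finset.mem_Icc] at hk
      rw [if_pos (by omega : k < p + 1)]
      rfl
    have hprod1 : ∏ k ∈ Icc 1 p, (if k < p + 1 then 1 else if k = p + 1 then r else k) = 1 := by
      apply Finset.prod_eq_one
      intro k hk
      simp only [Finset.mem_Icc] at hk
      rw [if_pos (by omega)]
    constructor
    · rw [Finset.sum_Icc_succ_top (by omega : 1 ≤ p + 1), hsum0]
      rw [if_neg (by omega), if_pos rfl]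
      omega
    · rw [Finset.prod_Icc_succ_top (by omega : 1 ≤ p + 1), hprod1]
      rw [if_neg (by omega), if_pos rfl]
      ring
  · intro n hn ⟨ihs, ihp⟩
    have hval : (if n + 1 < q then 1 else if n + 1 = q then r else n + 1) = n + 1 := by
      rw [if_neg (by omega), if_neg (by omega)]
    have hmono : q.choose 2 ≤ n.choose 2 := choose_two_mono hn
    constructor
    · rw [Finset.sum_Icc_succ_top (by omega : 1 ≤ n + 1), ihs, hval, choose_two_succ]
      omega
    · rw [Finset.prod_Icc_succ_top (by omega : 1 ≤ n + 1), hval, Nat.factorial_succ]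
      calc (∏ k ∈ Icc 1 n, (if k < q then 1 else if k = q then r else k)) * (n+1) * q.factorial
          = ((∏ k ∈ Icc 1 n, (if k < q then 1 else if k = q then r else k)) * q.factorial) * (n+1) := by ring
        _ = r * n.factorial * (n+1) := by rw [ihp]
        _ = r * ((n+1) * n.factorial) := by ring

/-- Extremal lemma: among sequences `s₁,…,s_n` with `1 ≤ s_k ≤ k` and `Σ(s_k − 1) = s`,
the minimum of `∏ s_k` is `r · n!/q!`, where `q`, `r` are the unique integers with
`1 ≤ r < q ≤ n` and `C(n,2) − s − 1 = C(q,2) − r`. -/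
theorem stmt_16 (n s q r : ℕ) (hn : 2 ≤ n) (hs : s < n.choose 2)
    (hr : 1 ≤ r) (hrq : r < q) (hq : q ≤ n)
    (heq : (n.choose 2 : ℤ) - s - 1 = (q.choose 2 : ℤ) - r) :
    (∀ f : ℕ → ℕ, (∀ k ∈ Finset.Icc 1 n, 1 ≤ f k ∧ f k ≤ k) →
        ∑ k ∈ Finset.Icc 1 n, (f k - 1) = s →
        r * (n.factorial / q.factorial) ≤ ∏ k ∈ Finset.Icc 1 n, f k) ∧
    (∃ f : ℕ → ℕ, (∀ k ∈ Finset.Icc 1 n, 1 ≤ f k ∧ f k ≤ k) ∧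
        ∑ k ∈ Finset.Icc 1 n, (f k - 1) = s ∧
        ∏ k ∈ Finset.Icc 1 n, f k = r * (n.factorial / q.factorial)) := by
  have hdvd : q.factorial ∣ n.factorial := Nat.factorial_dvd_factorial hq
  have hdiv : q.factorial * (r * (n.factorial / q.factorial)) = r * n.factorial := by
    rw [mul_comm r (n.factorial / q.factorial), ← mul_assoc,
      Nat.mul_div_cancel' hdvd, mul_comm]
  constructor
  · intro f hf hsum
    have h := main_lemma n s q r f (le_of_lt hs) (Or.inl ⟨hr, hrq, hq⟩) heq hf hsum
    have h2 : q.factorial * (r * (n.factorial / q.factorial)) ≤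
        q.factorial * ∏ k ∈ Finset.Icc 1 n, f k := by rw [hdiv]; exact h
    exact Nat.le_of_mul_le_mul_left h2 q.factorial_pos
  · refine ⟨fun k => if k < q then 1 else if k = q then r else k, ?_, ?_, ?_⟩
    · intro k hk
      simp only [Finset.mem_Icc] at hk
      simp only []
      by_cases h1 : k < q
      · rw [if_pos h1]; omega
      · rw [if_neg h1]
        by_cases h2 : k = q
        · rw [if_pos h2]; omega
        · rw [if_neg h2]; omega
    · obtain ⟨hsum, -⟩ := ext_aux q r hr hrq n hq
      rw [hsum]
      have hmono : q.choose 2 ≤ n.choose 2 := choose_two_mono hq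
      omega
    · obtain ⟨-, hprod⟩ := ext_aux q r hr hrq n hq
      apply Nat.eq_of_mul_eq_mul_right q.factorial_pos
      rw [hprod, ← hdiv]; ring
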